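/- For 0 < q < 1 and complex y with 0 < Im(y) < 2·(-log q), the series -∑_{ν=1}^∞ (ν/(1-q^{2ν}))e^{iνy} - ∑_{ν=1}^∞ (ν q^{2ν}/(1-q^{2ν}))e^{-iνy} converges absolutely and equals ∑_{m∈ℤ} 1/(4 sin²((y + imβ)/2)), where β = -2 log q. -/

import Mathlib

open Complex

lemma keyA16 {z : ℂ} (hz : 0 < z.im) :
    HasSum (fun ν : ℕ => -(((ν : ℂ) + 1) * Complex.exp (Complex.I * ((ν : ℂ) + 1) * z)))
      (1 / (4 * Complex.sin (z / 2) ^ 2)) := by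
  set x := Complex.exp (Complex.I * z) with hxdef
  have hx : ‖x‖ < 1 := by
    rw [hxdef, Complex.norm_exp]
    have : (Complex.I * z).re = -z.im := by simp
    rw [this, Real.exp_lt_one_iff]
    linarith
  have hx1 : (1 : ℂ) - x ≠ 0 := by
    intro h
    rw [(sub_eq_zero.mp h).symm] at hx; simp at hx
  have h1 : HasSum (fun n : ℕ => (n : ℂ) * x ^ n) (x / (1 - x) ^ 2) :=
    hasSum_coe_mul_geometric_of_norm_lt_one hx
  have h2 : HasSum (fun ν : ℕ => ((ν : ℂ) + 1) * x ^ (ν + 1)) (x / (1 - x) ^ 2) := by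
    have := (hasSum_nat_add_iff (f := fun n : ℕ => (n : ℂ) * x ^ n) 1).mpr
      (by simpa using h1)
    simpa using this
  have h3 := h2.neg
  have hval : 1 / (4 * Complex.sin (z / 2) ^ 2) = -(x / (1 - x) ^ 2) := by
    set u := Complex.exp (Complex.I * z / 2) with hudef
    have hu : u ≠ 0 := Complex.exp_ne_zero _
    have hxu : x = u * u := by
      rw [hxdef, hudef, ← Complex.exp_add]; congr 1; ring
    have hsin : Complex.sin (z / 2) = (u⁻¹ - u) * Complex.I / 2 := by
      rw [Complex.sin, hudef, ← Complex.exp_neg]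
      congr 3 <;> ring
    rw [hsin, hxu]
    have h1u : (1 : ℂ) - u * u ≠ 0 := by rwa [hxu] at hx1
    field_simp
    ring_nf
    rw [Complex.I_sq]
    ring
  rw [hval]
  convert h3 using 2 with ν
  · rfl
  rw [hxdef, ← Complex.exp_nat_mul]
  congr 1
  push_cast
  ring

lemma expterm16 {q β : ℝ} (hexpβ : Real.exp (-β) = q ^ 2) (w : ℂ) (k n : ℕ) :
    Complex.exp (w + ((k * n : ℕ) : ℂ) * (-(β : ℂ))) =
      Complex.exp w * ((q : ℂ) ^ (2 * k)) ^ n := by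
  rw [Complex.exp_add]
  congr 1
  rw [show ((k * n : ℕ) : ℂ) * (-(β : ℂ)) = ((k * n : ℕ) : ℂ) * ((-β : ℝ) : ℂ) by push_cast; ring,
    Complex.exp_nat_mul, ← Complex.ofReal_exp, hexpβ]
  push_cast
  rw [← pow_mul, ← pow_mul, mul_assoc]

set_option maxHeartbeats 1000000 in
theorem stmt_16 (q : ℝ) (hq0 : 0 < q) (hq1 : q < 1) (y : ℂ)
    (hy1 : 0 < y.im) (hy2 : y.im < 2 * (-Real.log q)) :
    ∃ V : ℂ,
      HasSum (fun m : ℤ =>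
        1 / (4 * Complex.sin ((y + Complex.I * (m : ℂ) * ((-2 * Real.log q : ℝ) : ℂ)) / 2) ^ 2))
        V ∧
      HasSum (fun ν : ℕ =>
        -((((ν : ℂ) + 1) / (1 - (q : ℂ) ^ (2 * (ν + 1))))
            * Complex.exp (Complex.I * ((ν : ℂ) + 1) * y))
          - (((ν : ℂ) + 1) * (q : ℂ) ^ (2 * (ν + 1)) / (1 - (q : ℂ) ^ (2 * (ν + 1))))
            * Complex.exp (-Complex.I * ((ν : ℂ) + 1) * y))
        V := by
  set β : ℝ := -2 * Real.log q with hβdef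
  have hβpos : 0 < β := by
    have := Real.log_neg hq0 hq1
    rw [hβdef]; linarith
  have hyβ : y.im < β := by rw [hβdef]; linarith
  have hexpβ : Real.exp (-β) = q ^ 2 := by
    rw [hβdef, show -(-2 * Real.log q) = (2 : ℕ) * Real.log q by push_cast; ring,
      Real.exp_nat_mul, Real.exp_log hq0]
  set z : ℤ → ℂ := fun m => y + Complex.I * (m : ℂ) * (β : ℂ) with hzdef
  have hzim : ∀ m : ℤ, (z m).im = y.im + m * β := by
    intro m
    simp [hzdef, Complex.add_im, Complex.mul_im, Complex.mul_re]
  set ζ : ℤ → ℂ := fun m => if 0 ≤ m then z m else -(z m) with hζdef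
  set c : ℝ := min y.im (β - y.im) with hcdef
  have hc : 0 < c := lt_min hy1 (by linarith)
  have hcy : c ≤ y.im := min_le_left _ _
  have hcby : c ≤ β - y.im := min_le_right _ _
  -- lower bounds on the imaginary parts
  have hζ1 : ∀ m : ℤ, c ≤ (ζ m).im := by
    intro m
    simp only [hζdef]
    split_ifs with h
    · rw [hzim]
      have h1 : (0:ℝ) ≤ (m:ℝ) * β := mul_nonneg (by exact_mod_cast h) hβpos.le
      linarith
    · push_neg at h
      rw [Complex.neg_im, hzim]
      have hm' : m ≤ -1 := by omega
      have hm : (m:ℝ) ≤ -1 := by exact_mod_cast hm'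
      have h1 : (m:ℝ) * β ≤ -1 * β := mul_le_mul_of_nonneg_right hm hβpos.le
      linarith
  have hζ2 : ∀ m : ℤ, β * m.natAbs ≤ (ζ m).im - c + β := by
    intro m
    simp only [hζdef]
    split_ifs with h
    · rw [hzim]
      have hna0 : (m.natAbs : ℤ) = m := Int.natAbs_of_nonneg h
      have hna : ((m.natAbs : ℕ) : ℝ) = (m : ℝ) := by
        have := congrArg (Int.cast : ℤ → ℝ) hna0
        rwa [Int.cast_natCast] at this
      rw [hna]
      nlinarith
    · push_neg at h
      rw [Complex.neg_im, hzim]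
      have hna0 : (m.natAbs : ℤ) = -m := by omega
      have hna : ((m.natAbs : ℕ) : ℝ) = -(m : ℝ) := by
        have := congrArg (Int.cast : ℤ → ℝ) hna0
        rwa [Int.cast_natCast, Int.cast_neg] at this
      rw [hna]
      nlinarith
  -- the doubly indexed family
  set g : ℤ × ℕ → ℂ := fun p =>
    -(((p.2 : ℂ) + 1) * Complex.exp (Complex.I * ((p.2 : ℂ) + 1) * ζ p.1)) with hgdef
  have hnorm : ∀ p : ℤ × ℕ,
      ‖g p‖ = ((p.2 : ℝ) + 1) * Real.exp (-(((p.2 : ℝ) + 1) * (ζ p.1).im)) := by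
    rintro ⟨m, ν⟩
    simp only [hgdef, norm_neg, norm_mul, Complex.norm_exp]
    have h1 : ‖((ν : ℂ) + 1)‖ = (ν : ℝ) + 1 := by
      rw [show ((ν : ℂ) + 1) = (((ν : ℝ) + 1 : ℝ) : ℂ) by push_cast; ring, Complex.norm_real, Real.norm_eq_abs,
        abs_of_pos (by positivity)]
    have h2 : (Complex.I * ((ν : ℂ) + 1) * ζ m).re = -(((ν : ℝ) + 1) * (ζ m).im) := by
      simp [Complex.mul_re, Complex.mul_im]
    rw [h1, h2]
  -- summability of the norms
  set θ : ℝ := Real.exp (-β) with hθdef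
  set ρ : ℝ := Real.exp (-c) with hρdef
  have hθ1 : θ < 1 := by rw [hθdef, Real.exp_lt_one_iff]; linarith
  have hρ1 : ρ < 1 := by rw [hρdef, Real.exp_lt_one_iff]; linarith
  have hθ0 : 0 < θ := Real.exp_pos _
  have hρ0 : 0 < ρ := Real.exp_pos _
  set G : ℤ → ℝ := fun m => θ ^ m.natAbs with hGdef
  set F : ℕ → ℝ := fun ν => Real.exp β * (((ν : ℝ) + 1) * ρ ^ (ν + 1)) with hFdef
  have hGnn : ∀ m, 0 ≤ G m := fun m => by positivity
  have hFnn : ∀ ν, 0 ≤ F ν := fun ν => by positivity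
  have hGsum : Summable G := by
    apply Summable.of_nat_of_neg_add_one
    · apply Summable.congr (summable_geometric_of_lt_one hθ0.le hθ1)
      intro n; simp [hGdef]
    · apply Summable.congr ((summable_geometric_of_lt_one hθ0.le hθ1).mul_left θ)
      intro n
      show θ * θ ^ n = θ ^ (-((n : ℤ) + 1)).natAbs
      have h : (-((n : ℤ) + 1)).natAbs = n + 1 := by omega
      rw [h, pow_succ]
      ring
  have hFsum : Summable F := by
    have base : Summable (fun n : ℕ => (n : ℝ) * ρ ^ n) :=
      (hasSum_coe_mul_geometric_of_norm_lt_one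
        (by rw [Real.norm_eq_abs, abs_of_pos hρ0]; exact hρ1)).summable
    have shifted := (summable_nat_add_iff 1).mpr base
    apply Summable.mul_left
    apply Summable.congr shifted
    intro n; push_cast; ring
  have hbound : ∀ p : ℤ × ℕ, ‖g p‖ ≤ G p.1 * F p.2 := by
    rintro ⟨m, ν⟩
    rw [hnorm ⟨m, ν⟩]
    simp only [hGdef, hFdef]
    have ht1 := hζ1 m
    have ht2 := hζ2 m
    have hexple : Real.exp (-(((ν : ℝ) + 1) * (ζ m).im)) ≤
        ρ ^ (ν + 1) * (Real.exp β * θ ^ m.natAbs) := by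
      rw [hρdef, hθdef, ← Real.exp_nat_mul, ← Real.exp_nat_mul, ← Real.exp_add, ← Real.exp_add]
      apply Real.exp_le_exp.mpr
      have hν0 : (0:ℝ) ≤ (ν : ℝ) := Nat.cast_nonneg _
      push_cast
      nlinarith [mul_nonneg hν0 (sub_nonneg.mpr ht1)]
    calc ((ν : ℝ) + 1) * Real.exp (-(((ν : ℝ) + 1) * (ζ m).im))
        ≤ ((ν : ℝ) + 1) * (ρ ^ (ν + 1) * (Real.exp β * θ ^ m.natAbs)) :=
          mul_le_mul_of_nonneg_left hexple (by positivity)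
      _ = θ ^ m.natAbs * (Real.exp β * (((ν : ℝ) + 1) * ρ ^ (ν + 1))) := by ring
  have hgsum : Summable g :=
    Summable.of_norm_bounded (hGsum.mul_of_nonneg hFsum hGnn hFnn) hbound
  set V : ℂ := ∑' p, g p with hVdef
  have hgV : HasSum g V := hgsum.hasSum
  -- fiberwise over m : sum over ν gives the elliptic potential terms
  have hfibm : ∀ m : ℤ,
      HasSum (fun ν : ℕ => g (m, ν)) (1 / (4 * Complex.sin (z m / 2) ^ 2)) := by
    intro m
    by_cases h : 0 ≤ m
    · have him : 0 < (z m).im := by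
        rw [hzim]
        have : (0:ℝ) ≤ (m:ℝ) * β := mul_nonneg (by exact_mod_cast h) hβpos.le
        linarith
      have := keyA16 him
      simpa only [hgdef, hζdef, if_pos h] using this
    · push_neg at h
      have him : 0 < (-(z m)).im := by
        rw [Complex.neg_im, hzim]
        have hm' : m ≤ -1 := by omega
        have hm : (m:ℝ) ≤ -1 := by exact_mod_cast hm'
        have h1 : (m:ℝ) * β ≤ -1 * β := mul_le_mul_of_nonneg_right hm hβpos.le
        linarith
      have hkey := keyA16 him
      have hval : 1 / (4 * Complex.sin (-(z m) / 2) ^ 2)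
          = 1 / (4 * Complex.sin (z m / 2) ^ 2) := by
        rw [neg_div, Complex.sin_neg, neg_sq]
      rw [hval] at hkey
      simpa only [hgdef, hζdef, if_neg (not_le.mpr h)] using hkey
  have hT : HasSum (fun m : ℤ => 1 / (4 * Complex.sin (z m / 2) ^ 2)) V :=
    hgV.prod_fiberwise hfibm
  -- fiberwise over ν : sum over m gives the Fourier coefficients
  have hswap : HasSum (fun p : ℕ × ℤ => g (p.2, p.1)) V :=
    (Equiv.prodComm ℕ ℤ).hasSum_iff.mpr hgV
  have hfibν : ∀ ν : ℕ,
      HasSum (fun m : ℤ => g (m, ν))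
        (-((((ν : ℂ) + 1) / (1 - (q : ℂ) ^ (2 * (ν + 1))))
            * Complex.exp (Complex.I * ((ν : ℂ) + 1) * y))
          - (((ν : ℂ) + 1) * (q : ℂ) ^ (2 * (ν + 1)) / (1 - (q : ℂ) ^ (2 * (ν + 1))))
            * Complex.exp (-Complex.I * ((ν : ℂ) + 1) * y)) := by
    intro ν
    set s : ℂ := (q : ℂ) ^ (2 * (ν + 1)) with hsdef
    have hs : ‖s‖ < 1 := by
      rw [hsdef, norm_pow, Complex.norm_real, Real.norm_eq_abs, abs_of_pos hq0]
      exact pow_lt_one₀ hq0.le hq1 (by omega)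
    have hs1 : (1 : ℂ) - s ≠ 0 := by
      intro hcon
      rw [(sub_eq_zero.mp hcon).symm] at hs; simp at hs
    set A : ℂ := -(((ν : ℂ) + 1) * Complex.exp (Complex.I * ((ν : ℂ) + 1) * y)) with hAdef
    set B : ℂ := -(((ν : ℂ) + 1) * Complex.exp (-Complex.I * ((ν : ℂ) + 1) * y)) with hBdef
    have hgm : ∀ n : ℕ, g ((n : ℤ), ν) = A * s ^ n := by
      intro n
      have hn : (0 : ℤ) ≤ (n : ℤ) := Int.natCast_nonneg n
      simp only [hgdef, hζdef, if_pos hn, hzdef]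
      have harg : Complex.I * ((ν : ℂ) + 1) * (y + Complex.I * ((n : ℤ) : ℂ) * (β : ℂ))
          = Complex.I * ((ν : ℂ) + 1) * y + (((ν + 1) * n : ℕ) : ℂ) * (-(β : ℂ)) := by
        push_cast
        ring_nf
        rw [Complex.I_sq]
        ring
      rw [harg, expterm16 hexpβ, hAdef, hsdef]
      ring
    have hgm' : ∀ n : ℕ, g (-((n : ℤ) + 1), ν) = (B * s) * s ^ n := by
      intro n
      have hn : ¬ (0 : ℤ) ≤ -((n : ℤ) + 1) := by omega
      simp only [hgdef, hζdef, if_neg hn, hzdef]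
      have harg : Complex.I * ((ν : ℂ) + 1) *
            (-(y + Complex.I * (Int.cast (-((n : ℤ) + 1)) : ℂ) * (β : ℂ)))
          = -Complex.I * ((ν : ℂ) + 1) * y + (((ν + 1) * (n + 1) : ℕ) : ℂ) * (-(β : ℂ)) := by
        push_cast
        ring_nf
        rw [Complex.I_sq]
        ring
      rw [harg, expterm16 hexpβ, hBdef, hsdef, pow_succ]
      ring
    have h1 : HasSum (fun n : ℕ => g ((n : ℤ), ν)) (A * (1 - s)⁻¹) := by
      have := (hasSum_geometric_of_norm_lt_one hs).mul_left A
      rwa [show (fun n : ℕ => A * s ^ n) = fun n : ℕ => g ((n : ℤ), ν) from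
        funext fun n => (hgm n).symm] at this
    have h2 : HasSum (fun n : ℕ => g (-((n : ℤ) + 1), ν)) ((B * s) * (1 - s)⁻¹) := by
      have := (hasSum_geometric_of_norm_lt_one hs).mul_left (B * s)
      rwa [show (fun n : ℕ => (B * s) * s ^ n) = fun n : ℕ => g (-((n : ℤ) + 1), ν) from
        funext fun n => (hgm' n).symm] at this
    have htot := HasSum.of_nat_of_neg_add_one (f := fun m : ℤ => g (m, ν)) h1 h2
    have hvaleq : A * (1 - s)⁻¹ + (B * s) * (1 - s)⁻¹
        = -((((ν : ℂ) + 1) / (1 - s)) * Complex.exp (Complex.I * ((ν : ℂ) + 1) * y))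
          - (((ν : ℂ) + 1) * s / (1 - s)) * Complex.exp (-Complex.I * ((ν : ℂ) + 1) * y) := by
      rw [hAdef, hBdef]
      simp only [div_eq_mul_inv]
      ring
    rwa [hvaleq] at htot
  have hF2 : HasSum (fun ν : ℕ =>
        -((((ν : ℂ) + 1) / (1 - (q : ℂ) ^ (2 * (ν + 1))))
            * Complex.exp (Complex.I * ((ν : ℂ) + 1) * y))
          - (((ν : ℂ) + 1) * (q : ℂ) ^ (2 * (ν + 1)) / (1 - (q : ℂ) ^ (2 * (ν + 1))))
            * Complex.exp (-Complex.I * ((ν : ℂ) + 1) * y)) V :=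
    hswap.prod_fiberwise hfibν
  exact ⟨V, hT, hF2⟩
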